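/- Let Ω = ⋃_{j=1}^n [a_j, a_j + r_j) be a disjoint union of n intervals with ∑ r_j = 1. If the zero set Z_Ω = {ξ : χ̂_Ω(ξ) = 0} ∪ {0} contains the arithmetic progression 0, d, 2d, ..., (2n−1)d for some d > 0, then dℤ ⊆ Z_Ω, d is a positive integer, and Ω d-tiles ℝ, i.e., ∑_{k∈ℤ} χ_Ω(x + k/d) = d for almost every x. -/

import Mathlib

open MeasureTheory Complex

lemma icoexp (A B : ℝ) (h : A ≤ B) (c : ℂ) (hc : c ≠ 0) :
    ∫ x in Set.Ico A B, Complex.exp (c * x) =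
      (Complex.exp (c * B) - Complex.exp (c * A)) / c := by
  rw [integral_Ico_eq_integral_Ioo, ← integral_Ioc_eq_integral_Ioo,
    ← intervalIntegral.integral_of_le h, integral_exp_mul_complex hc]

lemma argaux (θ : ℝ) : ∃ m : ℤ,
    θ = (Complex.exp (2 * Real.pi * Complex.I * θ)).arg / (2 * Real.pi) + m := by
  set z := Complex.exp (2 * Real.pi * Complex.I * θ) with hz
  have habs : ‖z‖ = 1 := by
    rw [hz, Complex.norm_exp]
    norm_num [Complex.mul_re, Complex.mul_im]
  have h1 : Complex.exp (z.arg * Complex.I) = z := by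
    have := Complex.norm_mul_exp_arg_mul_I z
    rwa [habs, ofReal_one, one_mul] at this
  have h2 : Complex.exp (2 * Real.pi * Complex.I * θ - z.arg * Complex.I) = 1 := by
    rw [Complex.exp_sub, h1, hz, div_self (Complex.exp_ne_zero _)]
  rw [Complex.exp_eq_one_iff] at h2
  obtain ⟨m, hm⟩ := h2
  refine ⟨m, ?_⟩
  have hI : ((2 * Real.pi * θ - z.arg : ℝ) : ℂ) * Complex.I
      = ((m * (2 * Real.pi) : ℝ) : ℂ) * Complex.I := by
    push_cast
    linear_combination hm
  have := mul_right_cancel₀ Complex.I_ne_zero hI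
  have hr : 2 * Real.pi * θ - z.arg = m * (2 * Real.pi) := by exact_mod_cast this
  have hpi : (2 * Real.pi) ≠ 0 := by positivity
  field_simp
  linarith [hr]

lemma msum_count (W : Multiset ℂ) (s : Finset ℂ) (hs : W.toFinset ⊆ s) (f : ℂ → ℂ) :
    (W.map f).sum = ∑ w ∈ s, (W.count w : ℂ) * f w := by
  rw [Finset.sum_multiset_map_count]
  rw [Finset.sum_subset hs]
  · simp [nsmul_eq_mul]
  · intro x _ hx
    simp [Multiset.count_eq_zero_of_notMem (by simpa using hx)]

lemma multiset_eq_of_powsums (U V : Multiset ℂ)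
    (h : ∀ l : ℕ, l < V.card + U.card → (V.map (· ^ l)).sum = (U.map (· ^ l)).sum) :
    V = U := by
  set s : Finset ℂ := V.toFinset ∪ U.toFinset with hsdef
  have hm : s.card ≤ V.card + U.card :=
    le_trans (Finset.card_union_le _ _)
      (add_le_add (Multiset.toFinset_card_le V) (Multiset.toFinset_card_le U))
  set e : Fin s.card → ℂ := fun i => (s.equivFin.symm i : ℂ) with he
  have hinj : Function.Injective e := by
    intro i j hij
    have := Subtype.ext hij
    simpa using s.equivFin.symm.injective this
  set cf : Fin s.card → ℂ := fun i => (V.count (e i) : ℂ) - (U.count (e i) : ℂ) with hcf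
  have hsumS : ∀ l : ℕ, l < s.card →
      ∑ w ∈ s, ((V.count w : ℂ) - U.count w) * w ^ l = 0 := by
    intro l hl
    have h1 := msum_count V s (Finset.subset_union_left) (· ^ l)
    have h2 := msum_count U s (Finset.subset_union_right) (· ^ l)
    have h3 := h l (lt_of_lt_of_le hl hm)
    rw [h1, h2] at h3
    rw [← sub_eq_zero] at h3
    rw [← h3, ← Finset.sum_sub_distrib]
    congr 1; ext w; ring
  have hcf0 : cf = 0 := by
    apply Matrix.eq_zero_of_forall_pow_sum_mul_pow_eq_zero hinj
    intro i
    have key := hsumS i i.2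
    rw [← Finset.sum_coe_sort s (fun w => ((V.count w : ℂ) - U.count w) * w ^ (i : ℕ))] at key
    rw [Fintype.sum_equiv s.equivFin.symm (fun j => cf j * e j ^ (i : ℕ))
      (fun x => ((V.count (x : ℂ) : ℂ) - U.count (x : ℂ)) * (x : ℂ) ^ (i : ℕ)) (fun j => rfl)]
    exact key
  have hcount : ∀ w : ℂ, V.count w = U.count w := by
    intro w
    by_cases hw : w ∈ s
    · have : cf (s.equivFin ⟨w, hw⟩) = 0 := by rw [hcf0]; rfl
      simp only [hcf, he, Equiv.symm_apply_apply] at this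
      have : (V.count w : ℂ) = U.count w := by
        rw [sub_eq_zero] at this; exact this
      exact_mod_cast this
    · rw [hsdef, Finset.mem_union, not_or] at hw
      rw [Multiset.count_eq_zero_of_notMem (by simpa using hw.1),
        Multiset.count_eq_zero_of_notMem (by simpa using hw.2)]
  exact Multiset.ext.mpr hcount

lemma map_sum_eq {α M : Type*} [AddCommMonoid M] [Fintype α] (f g : α → ℂ)
    (h : Multiset.map f Finset.univ.val = Multiset.map g Finset.univ.val) (F : ℂ → M) :
    ∑ j, F (f j) = ∑ j, F (g j) := by
  have h2 : Multiset.map (F ∘ f) Finset.univ.val = Multiset.map (F ∘ g) Finset.univ.val := by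
    rw [← Multiset.map_map, h, Multiset.map_map]
  show (Multiset.map (fun j => F (f j)) Finset.univ.val).sum
      = (Multiset.map (fun j => F (g j)) Finset.univ.val).sum
  rw [show (fun j => F (f j)) = F ∘ f from rfl, show (fun j => F (g j)) = F ∘ g from rfl, h2]

theorem stmt9 (n : ℕ) (hn : 0 < n) (a r : Fin n → ℝ)
    (hr : ∀ j, 0 < r j) (hsum : ∑ j, r j = 1)
    (hdisj : Pairwise fun i j => Disjoint (Set.Ico (a i) (a i + r i)) (Set.Ico (a j) (a j + r j)))
    (Ω : Set ℝ) (hΩ : Ω = ⋃ j, Set.Ico (a j) (a j + r j))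
    (d : ℝ) (hd : 0 < d)
    (hzero : ∀ l : ℕ, 1 ≤ l → l ≤ 2 * n - 1 →
      (∫ x in Ω, Complex.exp (2 * (Real.pi : ℂ) * Complex.I * ((l : ℂ) * (d : ℂ)) * (x : ℂ))) = 0) :
    (∀ k : ℤ, k ≠ 0 →
      (∫ x in Ω, Complex.exp (2 * (Real.pi : ℂ) * Complex.I * ((k : ℂ) * (d : ℂ)) * (x : ℂ))) = 0) ∧
    (∃ m : ℕ, 0 < m ∧ d = m) ∧
    (∀ᵐ x : ℝ ∂volume, ∑' k : ℤ, Ω.indicator (fun _ => (1 : ℝ)) (x + k / d) = d) := by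
  -- basic facts
  have hab : ∀ j, a j ≤ a j + r j := fun j => by linarith [hr j]
  -- integral formula
  have hmeas : ∀ j, MeasurableSet (Set.Ico (a j) (a j + r j)) := fun j => measurableSet_Ico
  have hInt : ∀ c : ℂ, IntegrableOn (fun x : ℝ => Complex.exp (c * x))
      (⋃ j, Set.Ico (a j) (a j + r j)) volume := by
    intro c
    rw [integrableOn_finite_iUnion]
    intro j
    exact ((Complex.continuous_exp.comp (by continuity)).integrableOn_Icc).mono_set
      Set.Ico_subset_Icc_self
  have hform : ∀ c : ℂ, c ≠ 0 → (∫ x in Ω, Complex.exp (c * x)) =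
      (∑ j, (Complex.exp (c * ((a j + r j : ℝ) : ℂ)) - Complex.exp (c * ((a j : ℝ) : ℂ)))) / c := by
    intro c hc
    rw [hΩ, integral_iUnion hmeas (fun _ _ hij => hdisj hij) (hInt c), tsum_fintype,
      Finset.sum_div]
    exact Finset.sum_congr rfl fun j _ => by
      rw [icoexp _ _ (hab j) c hc]
  -- exponentials as powers
  have hexp_l : ∀ (l : ℕ) (t : ℝ),
      Complex.exp ((2 * (Real.pi : ℂ) * Complex.I * ((l : ℂ) * (d : ℂ))) * (t : ℂ))
        = Complex.exp (2 * (Real.pi : ℂ) * Complex.I * ((d * t : ℝ) : ℂ)) ^ l := by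
    intro l t
    rw [← Complex.exp_nat_mul]
    congr 1
    push_cast
    ring
  have hexp_k : ∀ (k : ℤ) (t : ℝ),
      Complex.exp ((2 * (Real.pi : ℂ) * Complex.I * ((k : ℂ) * (d : ℂ))) * (t : ℂ))
        = Complex.exp (2 * (Real.pi : ℂ) * Complex.I * ((d * t : ℝ) : ℂ)) ^ k := by
    intro k t
    rw [← Complex.exp_int_mul]
    congr 1
    push_cast
    ring
  -- power sums vanish
  have hps : ∀ l : ℕ, 1 ≤ l → l ≤ 2 * n - 1 →
      ∑ j, (Complex.exp (2 * (Real.pi : ℂ) * Complex.I * ((d * (a j + r j) : ℝ) : ℂ)) ^ l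
        - Complex.exp (2 * (Real.pi : ℂ) * Complex.I * ((d * a j : ℝ) : ℂ)) ^ l) = 0 := by
    intro l h1 h2
    have hc : (2 * (Real.pi : ℂ) * Complex.I * ((l : ℂ) * (d : ℂ))) ≠ 0 := by
      have hld : ((l : ℂ) * (d : ℂ)) ≠ 0 :=
        mul_ne_zero (Nat.cast_ne_zero.mpr (by omega)) (by exact_mod_cast hd.ne')
      exact mul_ne_zero (mul_ne_zero (mul_ne_zero two_ne_zero
        (Complex.ofReal_ne_zero.mpr Real.pi_ne_zero)) Complex.I_ne_zero) hld
    have h0 := hzero l h1 h2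
    rw [hform _ hc, div_eq_zero_iff] at h0
    rcases h0 with h0 | h0
    · rw [← h0]
      exact Finset.sum_congr rfl fun j _ => by rw [← hexp_l l (a j + r j), ← hexp_l l (a j)]
    · exact absurd h0 hc
  -- multiset equality
  have hVU : Multiset.map
        (fun j => Complex.exp (2 * (Real.pi : ℂ) * Complex.I * ((d * (a j + r j) : ℝ) : ℂ)))
        (Finset.univ : Finset (Fin n)).val
      = Multiset.map (fun j => Complex.exp (2 * (Real.pi : ℂ) * Complex.I * ((d * a j : ℝ) : ℂ)))
        (Finset.univ : Finset (Fin n)).val := by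
    apply multiset_eq_of_powsums
    intro l hl
    have hcard : ∀ f : Fin n → ℂ,
        (Multiset.map f (Finset.univ : Finset (Fin n)).val).card = n := by
      intro f; rw [Multiset.card_map]; simp
    rw [hcard, hcard] at hl
    rw [Multiset.map_map, Multiset.map_map]
    rcases Nat.eq_zero_or_pos l with h0 | h1
    · subst h0; simp
    · have h2 : l ≤ 2 * n - 1 := by omega
      have := hps l h1 h2
      rw [Finset.sum_sub_distrib, sub_eq_zero] at this
      exact this
  choose mu hmu using fun j => argaux (d * a j)
  choose mv hmv using fun j => argaux (d * (a j + r j))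
  refine ⟨?_, ?_, ?_⟩
  · -- Part 1
    intro k hk
    have hc : (2 * (Real.pi : ℂ) * Complex.I * ((k : ℂ) * (d : ℂ))) ≠ 0 := by
      have hld : ((k : ℂ) * (d : ℂ)) ≠ 0 :=
        mul_ne_zero (Int.cast_ne_zero.mpr hk) (by exact_mod_cast hd.ne')
      exact mul_ne_zero (mul_ne_zero (mul_ne_zero two_ne_zero
        (Complex.ofReal_ne_zero.mpr Real.pi_ne_zero)) Complex.I_ne_zero) hld
    rw [hform _ hc, div_eq_zero_iff]
    left
    have : ∑ j, (Complex.exp ((2 * (Real.pi : ℂ) * Complex.I * ((k : ℂ) * (d : ℂ))) * ((a j + r j : ℝ) : ℂ))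
        - Complex.exp ((2 * (Real.pi : ℂ) * Complex.I * ((k : ℂ) * (d : ℂ))) * ((a j : ℝ) : ℂ))) =
        ∑ j, (Complex.exp (2 * (Real.pi : ℂ) * Complex.I * ((d * (a j + r j) : ℝ) : ℂ)) ^ k
        - Complex.exp (2 * (Real.pi : ℂ) * Complex.I * ((d * a j : ℝ) : ℂ)) ^ k) :=
      Finset.sum_congr rfl fun j _ => by rw [hexp_k k (a j + r j), hexp_k k (a j)]
    rw [this, Finset.sum_sub_distrib, sub_eq_zero]
    exact map_sum_eq _ _ hVU (fun z => z ^ k)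
  · -- Part 2
    have hargsum : ∑ j, (Complex.exp (2 * (Real.pi : ℂ) * Complex.I * ((d * (a j + r j) : ℝ) : ℂ))).arg / (2 * Real.pi)
        = ∑ j, (Complex.exp (2 * (Real.pi : ℂ) * Complex.I * ((d * a j : ℝ) : ℂ))).arg / (2 * Real.pi) :=
      map_sum_eq _ _ hVU (fun z => z.arg / (2 * Real.pi))
    have hdsum : ∑ j, d * (a j + r j) - ∑ j, d * a j = d := by
      rw [← Finset.sum_sub_distrib]
      have : ∀ j ∈ Finset.univ, d * (a j + r j) - d * a j = d * r j := fun j _ => by ring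
      rw [Finset.sum_congr rfl this, ← Finset.mul_sum, hsum, mul_one]
    have hdM : d = ((∑ j, mv j : ℤ) : ℝ) - ((∑ j, mu j : ℤ) : ℝ) := by
      rw [← hdsum, Finset.sum_congr rfl (fun j _ => hmv j),
        Finset.sum_congr rfl (fun j _ => hmu j), Finset.sum_add_distrib,
        Finset.sum_add_distrib, hargsum]
      push_cast
      ring
    set M : ℤ := ∑ j, mv j - ∑ j, mu j with hM
    have hdM' : d = (M : ℝ) := by rw [hdM, hM]; push_cast; ring
    have hMpos : 0 < M := by
      have : (0 : ℝ) < (M : ℝ) := hdM' ▸ hd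
      exact_mod_cast this
    refine ⟨M.toNat, by omega, ?_⟩
    rw [hdM']
    rw [show ((M.toNat : ℕ) : ℝ) = ((M.toNat : ℤ) : ℝ) by push_cast; ring,
      Int.toNat_of_nonneg hMpos.le]
  · -- Part 3
    apply ae_of_all volume
    intro x
    have hdec : ∀ y : ℝ, Ω.indicator (fun _ => (1 : ℝ)) y
        = ∑ j, (Set.Ico (a j) (a j + r j)).indicator (fun _ => (1 : ℝ)) y := by
      intro y
      by_cases hy : y ∈ Ω
      · rw [Set.indicator_of_mem hy]
        have hy' := hy
        rw [hΩ, Set.mem_iUnion] at hy'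
        obtain ⟨j₀, hj₀⟩ := hy'
        rw [Finset.sum_eq_single j₀]
        · rw [Set.indicator_of_mem hj₀]
        · intro j _ hj
          apply Set.indicator_of_notMem
          intro hyj
          exact Set.disjoint_left.mp (hdisj hj) hyj hj₀
        · intro h; exact absurd (Finset.mem_univ j₀) h
      · rw [Set.indicator_of_notMem hy, eq_comm]
        apply Finset.sum_eq_zero
        intro j _
        apply Set.indicator_of_notMem
        intro h
        exact hy (hΩ ▸ Set.mem_iUnion.mpr ⟨j, h⟩)
    have hmem : ∀ (j : Fin n) (k : ℤ), (x + (k : ℝ) / d ∈ Set.Ico (a j) (a j + r j))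
        ↔ k ∈ Finset.Ico ⌈(a j - x) * d⌉ ⌈(a j + r j - x) * d⌉ := by
      intro j k
      have e1 : a j ≤ x + (k : ℝ) / d ↔ (a j - x) * d ≤ (k : ℝ) := by
        rw [← le_div_iff₀ hd]
        constructor <;> intro <;> linarith
      have e2 : x + (k : ℝ) / d < a j + r j ↔ (k : ℝ) < (a j + r j - x) * d := by
        rw [← div_lt_iff₀ hd]
        constructor <;> intro <;> linarith
      rw [Set.mem_Ico, Finset.mem_Ico, Int.ceil_le, Int.lt_ceil, e1, e2]
    have hite : ∀ (j : Fin n) (k : ℤ),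
        (Set.Ico (a j) (a j + r j)).indicator (fun _ => (1 : ℝ)) (x + (k : ℝ) / d)
          = if k ∈ Finset.Ico ⌈(a j - x) * d⌉ ⌈(a j + r j - x) * d⌉ then (1 : ℝ) else 0 := by
      intro j k
      rw [Set.indicator_apply]
      exact if_congr (hmem j k) rfl rfl
    have hsummable : ∀ j : Fin n, Summable (fun k : ℤ =>
        (Set.Ico (a j) (a j + r j)).indicator (fun _ => (1 : ℝ)) (x + (k : ℝ) / d)) := by
      intro j
      apply summable_of_ne_finset_zero (s := Finset.Ico ⌈(a j - x) * d⌉ ⌈(a j + r j - x) * d⌉)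
      intro k hk
      rw [hite j k, if_neg hk]
    have hceil : ∀ t : ℝ, ((⌈t⌉ : ℤ) : ℝ) = t + Int.fract (-t) := by
      intro t
      rw [Int.fract, Int.floor_neg]
      push_cast
      ring
    have hv' : ∀ j, Int.fract (-((a j + r j - x) * d))
        = Int.fract (x * d - (Complex.exp (2 * (Real.pi : ℂ) * Complex.I * ((d * (a j + r j) : ℝ) : ℂ))).arg / (2 * Real.pi)) := by
      intro j
      have h1 : -((a j + r j - x) * d)
          = (x * d - (Complex.exp (2 * (Real.pi : ℂ) * Complex.I * ((d * (a j + r j) : ℝ) : ℂ))).arg / (2 * Real.pi)) - mv j := by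
        linear_combination -(hmv j)
      rw [h1, Int.fract_sub_intCast]
    have hu' : ∀ j, Int.fract (-((a j - x) * d))
        = Int.fract (x * d - (Complex.exp (2 * (Real.pi : ℂ) * Complex.I * ((d * a j : ℝ) : ℂ))).arg / (2 * Real.pi)) := by
      intro j
      have h1 : -((a j - x) * d)
          = (x * d - (Complex.exp (2 * (Real.pi : ℂ) * Complex.I * ((d * a j : ℝ) : ℂ))).arg / (2 * Real.pi)) - mu j := by
        linear_combination -(hmu j)
      rw [h1, Int.fract_sub_intCast]
    calc ∑' k : ℤ, Ω.indicator (fun _ => (1 : ℝ)) (x + (k : ℝ) / d)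
        = ∑' k : ℤ, ∑ j, (Set.Ico (a j) (a j + r j)).indicator (fun _ => (1 : ℝ)) (x + (k : ℝ) / d) :=
          tsum_congr fun k => hdec _
      _ = ∑ j, ∑' k : ℤ, (Set.Ico (a j) (a j + r j)).indicator (fun _ => (1 : ℝ)) (x + (k : ℝ) / d) :=
          Summable.tsum_finsetSum fun j _ => hsummable j
      _ = ∑ j, (((⌈(a j + r j - x) * d⌉ : ℤ) : ℝ) - ((⌈(a j - x) * d⌉ : ℤ) : ℝ)) := by
          apply Finset.sum_congr rfl
          intro j _
          rw [tsum_eq_sum (s := Finset.Ico ⌈(a j - x) * d⌉ ⌈(a j + r j - x) * d⌉)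
            (fun k hk => by rw [hite j k, if_neg hk])]
          rw [Finset.sum_congr rfl (fun k hk => by rw [hite j k, if_pos hk]),
            Finset.sum_const, Int.card_Ico, nsmul_eq_mul, mul_one]
          have hle : ⌈(a j - x) * d⌉ ≤ ⌈(a j + r j - x) * d⌉ :=
            Int.ceil_le_ceil (by nlinarith [hr j, hd])
          rw [show (((⌈(a j + r j - x) * d⌉ - ⌈(a j - x) * d⌉).toNat : ℕ) : ℝ)
              = (((⌈(a j + r j - x) * d⌉ - ⌈(a j - x) * d⌉).toNat : ℤ) : ℝ) by push_cast; ring,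
            Int.toNat_of_nonneg (by omega)]
          push_cast
          ring
      _ = d := by
          have hterm : ∀ j ∈ Finset.univ, (((⌈(a j + r j - x) * d⌉ : ℤ) : ℝ) - ((⌈(a j - x) * d⌉ : ℤ) : ℝ))
              = r j * d + (Int.fract (-((a j + r j - x) * d)) - Int.fract (-((a j - x) * d))) := by
            intro j _
            rw [hceil, hceil]
            ring
          rw [Finset.sum_congr rfl hterm, Finset.sum_add_distrib, Finset.sum_sub_distrib]
          have h1 : ∑ j, r j * d = d := by rw [← Finset.sum_mul, hsum, one_mul]
          have h2 : ∑ j, Int.fract (-((a j + r j - x) * d)) = ∑ j, Int.fract (-((a j - x) * d)) := by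
            rw [Finset.sum_congr rfl (fun j _ => hv' j), Finset.sum_congr rfl (fun j _ => hu' j)]
            exact map_sum_eq _ _ hVU (fun z => Int.fract (x * d - z.arg / (2 * Real.pi)))
          rw [h1, h2]
          ring
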